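/- Let α ∈ (ρ_c^0, 1) with α ≠ 1 − ρ_c^0 and β ∈ (1 − ρ_c^1, 1) with β ≠ ρ_c^1 (the transitional/canard parameter regions). Then for every δ > 0 there exists ε_0 > 0 such that for every ε ∈ (0, ε_0) and every twice continuously differentiable ρ : [0,1] → ℝ solving the stationary boundary value problem, the constant total flux satisfies |k(0)(−ε ρ'(0) + ρ(0)(1 − ρ(0))) − k(ξ*)/4| < δ; i.e., as ε → 0 the flux through the corridor converges to the maximal flux (1/4)·min_ξ k(ξ) of the bottleneck. -/

import Mathlib

open Set

/-- The total flux `j(x) = -ε ρ'(x) + ρ(x)(1-ρ(x))` of a density profile `ρ` on `[0,1]`. -/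
noncomputable def flux (ε : ℝ) (ρ : ℝ → ℝ) (x : ℝ) : ℝ :=
  -ε * derivWithin ρ (Icc (0:ℝ) 1) x + ρ x * (1 - ρ x)

/-- `ρ` is a (twice continuously differentiable) solution of the stationary boundary value
problem: `(k j)' = 0` on `[0,1]`, `j(0) = α(1-ρ(0))`, `j(1) = β ρ(1)`. -/
def IsStatSol (k : ℝ → ℝ) (ε α β : ℝ) (ρ : ℝ → ℝ) : Prop :=
  ContDiffOn ℝ 2 ρ (Icc (0:ℝ) 1) ∧
  (∀ x ∈ Icc (0:ℝ) 1, derivWithin (fun y => k y * flux ε ρ y) (Icc (0:ℝ) 1) x = 0) ∧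
  flux ε ρ 0 = α * (1 - ρ 0) ∧
  flux ε ρ 1 = β * ρ 1

/-- `ρ_c^0 = (1/2)(1 - √(1 - k(ξ*)/k(0)))`. -/
noncomputable def rhoC0 (k : ℝ → ℝ) (ξs : ℝ) : ℝ :=
  1/2 * (1 - Real.sqrt (1 - k ξs / k 0))

/-- `ρ_c^1 = (1/2)(1 + √(1 - k(ξ*)/k(1)))`. -/
noncomputable def rhoC1 (k : ℝ → ℝ) (ξs : ℝ) : ℝ :=
  1/2 * (1 + Real.sqrt (1 - k ξs / k 1))

open Filter Topology

set_option maxHeartbeats 4000000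

lemma no_downcross {g gd : ℝ → ℝ} {a b : ℝ}
    (hder : ∀ x ∈ Icc a b, HasDerivWithinAt g (gd x) (Icc a b) x)
    (hga : 0 < g a)
    (hcross : ∀ x ∈ Icc a b, g x = 0 → 0 < gd x) :
    ∀ x ∈ Icc a b, 0 < g x := by
  by_contra h
  push_neg at h
  obtain ⟨z, hz, hgz⟩ := h
  have hcont : ContinuousOn g (Icc a b) := fun x hx => (hder x hx).continuousWithinAt
  have hSne : ({x | x ∈ Icc a b ∧ g x ≤ 0} : Set ℝ).Nonempty := ⟨z, hz, hgz⟩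
  have hSclosed : IsClosed ({x | x ∈ Icc a b ∧ g x ≤ 0} : Set ℝ) := by
    have hEq : ({x | x ∈ Icc a b ∧ g x ≤ 0} : Set ℝ) = Icc a b ∩ g ⁻¹' (Iic 0) := by
      ext x; simp [Set.mem_inter_iff]
    rw [hEq]
    exact ContinuousOn.preimage_isClosed_of_isClosed hcont isClosed_Icc isClosed_Iic
  have hSbdd : BddBelow ({x | x ∈ Icc a b ∧ g x ≤ 0} : Set ℝ) := ⟨a, fun x hx => hx.1.1⟩
  obtain ⟨hcI, hgc⟩ : sInf {x | x ∈ Icc a b ∧ g x ≤ 0} ∈ {x | x ∈ Icc a b ∧ g x ≤ 0} :=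
    hSclosed.csInf_mem hSne hSbdd
  set c := sInf {x | x ∈ Icc a b ∧ g x ≤ 0} with hc
  have hac : a ≤ c := le_csInf hSne fun x hx => hx.1.1
  have hca : a < c := hac.lt_of_ne (by
    intro h'
    rw [← h'] at hgc
    exact absurd hgc (not_le.2 hga))
  have hlt : ∀ y ∈ Ico a c, 0 < g y := by
    intro y hy
    by_contra hy'
    push_neg at hy'
    have : y ∈ {x | x ∈ Icc a b ∧ g x ≤ 0} := ⟨⟨hy.1, hy.2.le.trans hcI.2⟩, hy'⟩
    exact absurd (csInf_le hSbdd this) (not_le.2 hy.2)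
  have hsub : Ico a c ⊆ Icc a b := fun y hy => ⟨hy.1, hy.2.le.trans hcI.2⟩
  have hnebot : (𝓝[Ico a c] c).NeBot := by
    rw [← mem_closure_iff_nhdsWithin_neBot, closure_Ico hca.ne]
    exact ⟨hac, le_refl c⟩
  have hgc0 : g c = 0 := by
    have htend : Tendsto g (𝓝[Ico a c] c) (𝓝 (g c)) :=
      ((hcont c hcI).mono hsub).tendsto
    have hge : 0 ≤ g c :=
      ge_of_tendsto htend (eventually_mem_nhdsWithin.mono fun y hy => (hlt y hy).le)
    exact le_antisymm hgc hge
  have hgd : 0 < gd c := hcross c hcI hgc0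
  have hdc : HasDerivWithinAt g (gd c) (Ico a c) c := (hder c hcI).mono hsub
  rw [hasDerivWithinAt_iff_tendsto_slope] at hdc
  have hdiff : Ico a c \ {c} = Ico a c :=
    Set.diff_singleton_eq_self (by simp)
  rw [hdiff] at hdc
  have hev : ∀ᶠ y in 𝓝[Ico a c] c, 0 < slope g c y :=
    hdc.eventually (eventually_gt_nhds hgd)
  obtain ⟨y, hy1, hy2⟩ := (hev.and eventually_mem_nhdsWithin).exists
  have hyc : y - c < 0 := sub_neg.2 hy2.2
  have hslope : slope g c y = g y / (y - c) := by
    rw [slope_def_field, hgc0, sub_zero]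
  rw [hslope] at hy1
  have : g y < 0 := by
    by_contra hgy
    push_neg at hgy
    exact absurd hy1 (not_lt.2 (div_nonpos_of_nonneg_of_nonpos hgy hyc.le))
  exact absurd this (not_lt.2 (hlt y hy2).le)

lemma integrate_ge {g gd : ℝ → ℝ} {a b q : ℝ} (hab : a ≤ b)
    (hder : ∀ x ∈ Icc a b, HasDerivWithinAt g (gd x) (Icc a b) x)
    (hq : ∀ x ∈ Icc a b, q ≤ gd x) :
    q * (b - a) ≤ g b - g a := by
  have hH : ∀ x ∈ Ioo a b, HasDerivAt (fun y => g y - q * y) (gd x - q) x := by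
    intro x hx
    have h1 : HasDerivAt g (gd x) x :=
      (hder x (Ioo_subset_Icc_self hx)).hasDerivAt (Icc_mem_nhds hx.1 hx.2)
    exact (h1.sub ((hasDerivAt_id x).const_mul q)).congr_deriv (by ring)
  have hmono : MonotoneOn (fun y => g y - q * y) (Icc a b) := by
    apply monotoneOn_of_deriv_nonneg (convex_Icc a b)
    · exact ContinuousOn.sub (fun x hx => (hder x hx).continuousWithinAt)
        (continuousOn_const.mul continuousOn_id)
    · intro x hx
      rw [interior_Icc] at hx
      exact (hH x hx).differentiableAt.differentiableWithinAt
    · intro x hx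
      rw [interior_Icc] at hx
      rw [(hH x hx).deriv]
      have := hq x (Ioo_subset_Icc_self hx)
      linarith
  have := hmono ⟨le_refl a, hab⟩ ⟨hab, le_refl b⟩ hab
  simp only at this
  nlinarith

lemma add_div_le_max {a b x d : ℝ} (ha : 0 < a) (h1 : a ≤ x) (h2 : x ≤ b) (hd : 0 ≤ d) :
    x + d / x ≤ max (a + d / a) (b + d / b) := by
  have hx : 0 < x := ha.trans_le h1
  have hb : 0 < b := hx.trans_le h2
  rcases le_or_gt (x * a) d with hcase | hcase
  · refine le_trans ?_ (le_max_left _ _)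
    have key : a + d / a - (x + d / x) = (x - a) * (d - x * a) / (x * a) := by
      field_simp; ring
    have h0 : 0 ≤ (x - a) * (d - x * a) / (x * a) :=
      div_nonneg (mul_nonneg (by linarith) (by linarith)) (by positivity)
    linarith
  · refine le_trans ?_ (le_max_right _ _)
    have key : b + d / b - (x + d / x) = (b - x) * (x * b - d) / (x * b) := by
      field_simp; ring
    have h0 : 0 ≤ (b - x) * (x * b - d) / (x * b) := by
      have : d < x * b := hcase.trans_le (by nlinarith)
      exact div_nonneg (mul_nonneg (by linarith) (by linarith)) (by positivity)
    linarith

lemma case_neg {k ρ ρd : ℝ → ℝ} {ε c α β : ℝ}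
    (hkpos : ∀ x ∈ Icc (0:ℝ) 1, 0 < k x)
    (hε : 0 < ε) (hα : 0 < α) (hβ : 0 < β)
    (hρder : ∀ x ∈ Icc (0:ℝ) 1, HasDerivWithinAt ρ (ρd x) (Icc (0:ℝ) 1) x)
    (hODE : ∀ x ∈ Icc (0:ℝ) 1, ε * ρd x = ρ x * (1 - ρ x) - c / k x)
    (hbc0 : k 0 * (α * (1 - ρ 0)) = c)
    (hbc1 : k 1 * (β * ρ 1) = c)
    (hc : c ≤ 0) : False := by
  have h0I : (0:ℝ) ∈ Icc (0:ℝ) 1 := by norm_num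
  have h1I : (1:ℝ) ∈ Icc (0:ℝ) 1 := by norm_num
  have hk0 : 0 < k 0 := hkpos 0 h0I
  have hk1 : 0 < k 1 := hkpos 1 h1I
  have hρ0 : 1 ≤ ρ 0 := by nlinarith [mul_pos hk0 hα]
  have hρ1 : ρ 1 ≤ 0 := by nlinarith [mul_pos hk1 hβ]
  have := no_downcross (g := fun x => ρ x - 1/2) (gd := ρd)
    (fun x hx => (hρder x hx).sub_const _)
    (by linarith)
    (by
      intro x hx hgx
      have hρx : ρ x = 1/2 := by linarith [hgx]
      have hO := hODE x hx
      have hckx : c / k x ≤ 0 := div_nonpos_of_nonpos_of_nonneg hc (hkpos x hx).le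
      rw [hρx] at hO
      show 0 < ρd x
      by_contra hcon
      push_neg at hcon
      have := mul_nonpos_of_nonneg_of_nonpos hε.le hcon
      nlinarith)
  have := this 1 h1I
  linarith

lemma case_large {k ρ ρd : ℝ → ℝ} {ε c α β ξs δ' η m : ℝ}
    (hkpos : ∀ x ∈ Icc (0:ℝ) 1, 0 < k x)
    (hε : 0 < ε) (hα : 0 < α) (hβ : 0 < β)
    (hρder : ∀ x ∈ Icc (0:ℝ) 1, HasDerivWithinAt ρ (ρd x) (Icc (0:ℝ) 1) x)
    (hODE : ∀ x ∈ Icc (0:ℝ) 1, ε * ρd x = ρ x * (1 - ρ x) - c / k x)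
    (hbc0 : k 0 * (α * (1 - ρ 0)) = c)
    (hbc1 : k 1 * (β * ρ 1) = c)
    (hδ' : 0 < δ') (hks : 0 < k ξs)
    (hc : k ξs / 4 + δ' ≤ c)
    (hηpos : 0 < η)
    (hsub : Icc (ξs - η) (ξs + η) ⊆ Icc (0:ℝ) 1)
    (hm : 0 < m)
    (hmle : ∀ x ∈ Icc (ξs - η) (ξs + η), 1/4 + m ≤ c / k x)
    (hεsmall : ε < 2 * η * m) : False := by
  have h0I : (0:ℝ) ∈ Icc (0:ℝ) 1 := by norm_num
  have h1I : (1:ℝ) ∈ Icc (0:ℝ) 1 := by norm_num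
  have hk0 : 0 < k 0 := hkpos 0 h0I
  have hk1 : 0 < k 1 := hkpos 1 h1I
  have hcpos : 0 < c := by nlinarith
  -- ρ ≤ 1 everywhere
  have hρle1 : ∀ x ∈ Icc (0:ℝ) 1, ρ x ≤ 1 := by
    intro x hx
    by_contra hgt
    push_neg at hgt
    set t := (ρ x - 1) / 2 with ht
    have htpos : 0 < t := by simp [ht]; linarith
    have h10 : 1 - ρ 0 = c / (k 0 * α) := by
      field_simp
      nlinarith
    have := no_downcross (g := fun y => 1 + t - ρ y) (gd := fun y => -ρd y)
      (fun y hy => ((hρder y hy).const_sub _))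
      (by
        have : c / (k 0 * α) > 0 := by positivity
        linarith)
      (by
        intro y hy hgy
        have hρy : ρ y = 1 + t := by linarith
        have hO := hODE y hy
        have hcky : 0 < c / k y := div_pos hcpos (hkpos y hy)
        rw [hρy] at hO
        show 0 < -ρd y
        by_contra hcon
        push_neg at hcon
        have hpd : 0 ≤ ρd y := by linarith
        have := mul_nonneg hε.le hpd
        nlinarith [mul_pos htpos (show (0:ℝ) < 1 + t by linarith)])
    have := this x hx
    linarith
  -- ρ ≥ 0 everywhere
  have hρge0 : ∀ x ∈ Icc (0:ℝ) 1, 0 ≤ ρ x := by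
    intro x hx
    by_contra hlt
    push_neg at hlt
    set t := -ρ x / 2 with ht
    have htpos : 0 < t := by simp [ht]; linarith
    have hsub2 : Icc x 1 ⊆ Icc (0:ℝ) 1 := Icc_subset_Icc hx.1 le_rfl
    have := no_downcross (g := fun y => -t - ρ y) (gd := fun y => -ρd y)
      (fun y hy => ((hρder y (hsub2 hy)).mono hsub2).const_sub _)
      (by linarith [ht])
      (by
        intro y hy hgy
        have hρy : ρ y = -t := by linarith
        have hO := hODE y (hsub2 hy)
        have hcky : 0 < c / k y := div_pos hcpos (hkpos y (hsub2 hy))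
        rw [hρy] at hO
        show 0 < -ρd y
        by_contra hcon
        push_neg at hcon
        have hpd : 0 ≤ ρd y := by linarith
        have := mul_nonneg hε.le hpd
        nlinarith)
    have h1m : (1:ℝ) ∈ Icc x 1 := ⟨hx.2, le_rfl⟩
    have := this 1 h1m
    have hρ1 : 0 < ρ 1 := by nlinarith [mul_pos hk1 hβ]
    linarith
  -- fast decrease on the bottleneck interval
  have habI : ξs - η ≤ ξs + η := by linarith
  have hkey := integrate_ge (g := fun x => -ρ x) (gd := fun x => -ρd x) (q := m / ε) habI
    (fun x hx => ((hρder x (hsub hx)).mono hsub).neg)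
    (by
      intro x hx
      have hO := hODE x (hsub hx)
      have hm' := hmle x hx
      have hf : ρ x * (1 - ρ x) ≤ 1/4 := by nlinarith [sq_nonneg (ρ x - 1/2)]
      have hle : ε * ρd x ≤ -m := by linarith
      show m / ε ≤ -ρd x
      rw [div_le_iff₀ hε]
      nlinarith)
  have hl : ρ (ξs - η) ≤ 1 := hρle1 _ (hsub ⟨le_rfl, habI⟩)
  have hr : 0 ≤ ρ (ξs + η) := hρge0 _ (hsub ⟨habI, le_rfl⟩)
  have hfin : m / ε * (2 * η) ≤ 1 := by
    have h2 : (ξs + η) - (ξs - η) = 2 * η := by ring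
    rw [h2] at hkey
    linarith
  rw [div_mul_eq_mul_div, div_le_iff₀ hε] at hfin
  nlinarith

lemma case_small {k ρ ρd : ℝ → ℝ} {ε c α β ξs δ' K r τ θ C' p0 p1 : ℝ}
    (hkpos : ∀ x ∈ Icc (0:ℝ) 1, 0 < k x)
    (hkmin : ∀ x ∈ Icc (0:ℝ) 1, k ξs ≤ k x)
    (hkK : ∀ x ∈ Icc (0:ℝ) 1, k x ≤ K)
    (hξI : ξs ∈ Icc (0:ℝ) 1)
    (hks : 0 < k ξs)
    (hε : 0 < ε) (hδ' : 0 < δ') (hδ'k : δ' ≤ k ξs / 32)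
    (hρder : ∀ x ∈ Icc (0:ℝ) 1, HasDerivWithinAt ρ (ρd x) (Icc (0:ℝ) 1) x)
    (hODE : ∀ x ∈ Icc (0:ℝ) 1, ε * ρd x = ρ x * (1 - ρ x) - c / k x)
    (hψder : ∀ x ∈ Icc (0:ℝ) 1, HasDerivWithinAt (fun y => ρ y * (1 - ρ y) - c / k y)
      ((1 - 2 * ρ x) * ρd x + c * deriv k x / (k x) ^ 2) (Icc (0:ℝ) 1) x)
    (hbc0 : k 0 * (α * (1 - ρ 0)) = c)
    (hbc1 : k 1 * (β * ρ 1) = c)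
    (hp0a : 0 < p0) (hp0b : p0 < 1/2) (hid0 : k 0 * (p0 * (1 - p0)) = k ξs / 4)
    (hp1a : 1/2 < p1) (hp1b : p1 < 1) (hid1 : k 1 * (p1 * (1 - p1)) = k ξs / 4)
    (hα : p0 < α) (hβ : 1 - p1 < β)
    (hc0 : 0 < c) (hc : c ≤ k ξs / 4 - δ')
    (hr2 : r ^ 2 = δ' / (2 * k ξs)) (hrpos : 0 < r) (hr8 : r ≤ 1/8)
    (hτ : τ = δ' / (2 * K)) (hθ : θ = δ' / (8 * K)) (hK : 0 < K)
    (hC' : ∀ x ∈ Icc (0:ℝ) 1, |c * deriv k x / (k x) ^ 2| ≤ C')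
    (hε1 : ε < τ / 2) (hε2 : ε * (C' + 1) < r * τ)
    (hε3 : ε < r / 16) (hε4 : ε * (C' + 1) < r * θ) (hε5 : ε < r * θ / 2) :
    False := by
  have h0I : (0:ℝ) ∈ Icc (0:ℝ) 1 := by norm_num
  have h1I : (1:ℝ) ∈ Icc (0:ℝ) 1 := by norm_num
  have hk0 : 0 < k 0 := hkpos 0 h0I
  have hk1 : 0 < k 1 := hkpos 1 h1I
  have hα0 : 0 < α := hp0a.trans hα
  have hβ0 : 0 < β := by linarith
  have hτpos : 0 < τ := by rw [hτ]; positivity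
  have hθpos : 0 < θ := by rw [hθ]; positivity
  have hC'0 : 0 ≤ C' := le_trans (abs_nonneg _) (hC' 0 h0I)
  have hδhalf : δ' / k ξs = 2 * (δ' / (2 * k ξs)) := by ring
  -- uniform bound on c / k x
  have hcku : ∀ x ∈ Icc (0:ℝ) 1, c / k x ≤ 1/4 - δ' / k ξs := by
    intro x hx
    have h1 : c / k x ≤ c / k ξs :=
      div_le_div_of_nonneg_left hc0.le hks (hkmin x hx)
    have h2 : c / k ξs ≤ 1/4 - δ' / k ξs := by
      rw [div_le_iff₀ hks]
      have h3 : (1/4 - δ' / k ξs) * k ξs = k ξs / 4 - δ' := by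
        field_simp
      linarith
    linarith
  have hckpos : ∀ x ∈ Icc (0:ℝ) 1, 0 < c / k x := fun x hx => div_pos hc0 (hkpos x hx)
  -- boundary values
  have hρ0eq : ρ 0 = 1 - c / (k 0 * α) := by
    have h1 : (1 - ρ 0) = c / (k 0 * α) := by
      rw [eq_div_iff (by positivity)]
      linear_combination hbc0
    linarith
  have hbc1' : β * ρ 1 = c / k 1 := by
    rw [eq_div_iff hk1.ne']
    linear_combination hbc1
  -- upper bound on u at p0
  have hkp : k 0 * p0 ≤ K := by nlinarith only [hkK 0 h0I, hk0, hp0a, hp0b]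
  have hup0 : c / (k 0 * p0) ≤ 1 - p0 - δ' / K := by
    rw [div_le_iff₀ (by positivity : (0:ℝ) < k 0 * p0)]
    have hδK : δ' / K * (k 0 * p0) ≤ δ' := by
      rw [div_mul_eq_mul_div, div_le_iff₀ hK]
      nlinarith only [hδ', hkp]
    have hexp : (1 - p0 - δ' / K) * (k 0 * p0)
        = k 0 * (p0 * (1 - p0)) - δ' / K * (k 0 * p0) := by ring
    rw [hexp, hid0]
    linarith
  have hu_le : c / (k 0 * α) ≤ c / (k 0 * p0) :=
    div_le_div_of_nonneg_left hc0.le (by positivity) (by nlinarith only [hα, hk0])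
  have hρ0ge : p0 ≤ ρ 0 := by
    rw [hρ0eq]
    have h5 : 0 < δ' / K := by positivity
    linarith only [hu_le, hup0, h5]
  -- the strip margin: for 1/2 - r ≤ ρ ≤ 1/2 + r, ψ ≥ r ^ 2
  have hstrip : ∀ x ∈ Icc (0:ℝ) 1, 1/2 - r ≤ ρ x → ρ x ≤ 1/2 + r →
      r ^ 2 ≤ ρ x * (1 - ρ x) - c / k x := by
    intro x hx hl hu
    have hcx := hcku x hx
    have hsq : (ρ x - 1/2) ^ 2 ≤ r ^ 2 := by nlinarith only [hl, hu]
    have hfval : 1/4 - (ρ x - 1/2) ^ 2 = ρ x * (1 - ρ x) := by ring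
    have h5 : δ' / k ξs - r ^ 2 = r ^ 2 := by rw [hr2]; linarith only [hδhalf]
    nlinarith only [hsq, hfval, hcx, h5]
  -- STEP 1 : reach the strip before x = 1/2
  have hstep1 : ∃ x0 ∈ Icc (0:ℝ) (1/2), 1/2 - r < ρ x0 := by
    by_cases hA : 1/2 - r < ρ 0
    · exact ⟨0, ⟨le_rfl, by norm_num⟩, hA⟩
    · push_neg at hA
      have hu_ge : 1/2 + r ≤ c / (k 0 * α) := by rw [hρ0eq] at hA; linarith
      have hα12 : α ≤ 1/2 := by
        by_contra hcon
        push_neg at hcon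
        have hu2 := hu_ge
        rw [le_div_iff₀ (by positivity : (0:ℝ) < k 0 * α)] at hu2
        have hh1 : k 0 / 4 < (1/2 + r) * (k 0 * α) := by
          nlinarith only [mul_pos hk0 (sub_pos.2 hcon),
            mul_nonneg hrpos.le (mul_pos hk0 hα0).le]
        have hh2 : k ξs ≤ k 0 := hkmin 0 h0I
        linarith only [hh1, hh2, hu2, hc, hδ']
      have hconv := add_div_le_max (a := p0) (b := 1/2) (x := α) (d := c / k 0)
        hp0a hα.le hα12 (by positivity)
      have hdd : ∀ y : ℝ, (c / k 0) / y = c / (k 0 * y) := by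
        intro y; rw [div_div]
      have hb1 : p0 + (c / k 0) / p0 ≤ 1 - 2 * τ := by
        rw [hdd p0, hτ]
        have : δ' / K = 2 * (δ' / (2 * K)) := by ring
        linarith [hup0]
      have hck0 : c / k 0 ≤ 1/4 - τ := by
        rw [div_le_iff₀ hk0, hτ]
        have h1 : δ' / (2 * K) * k 0 ≤ δ' / 2 := by
          rw [div_mul_eq_mul_div, div_le_div_iff₀ (by positivity) (by norm_num)]
          nlinarith only [hδ', hkK 0 h0I]
        linarith only [h1, hkmin 0 h0I, hc, hδ']
      have hb2 : 1/2 + (c / k 0) / (1/2) ≤ 1 - 2 * τ := by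
        have h22 : (c / k 0) / (1/2) = 2 * (c / k 0) := by ring
        rw [h22]
        linarith
      have hsum : α + c / (k 0 * α) ≤ 1 - 2 * τ := by
        rw [← hdd α]
        exact le_trans hconv (max_le hb1 hb2)
      have hψ0 : τ ≤ ρ 0 * (1 - ρ 0) - c / k 0 := by
        rw [hρ0eq]
        have hcu : c / k 0 = α * (c / (k 0 * α)) := by
          field_simp
        rw [hcu]
        have h1u : 2 * τ ≤ 1 - c / (k 0 * α) - α := by linarith [hsum]
        have hu12 : 1/2 ≤ c / (k 0 * α) := by linarith only [hu_ge, hrpos]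
        nlinarith only [h1u, hu12, hτpos]
      by_contra hno
      push_neg at hno
      have hsubI : Icc (0:ℝ) (1/2) ⊆ Icc (0:ℝ) 1 := Icc_subset_Icc le_rfl (by norm_num)
      have hψgt := no_downcross (a := (0:ℝ)) (b := 1/2)
        (g := fun x => (ρ x * (1 - ρ x) - c / k x) - τ / 2)
        (gd := fun x => (1 - 2 * ρ x) * ρd x + c * deriv k x / (k x) ^ 2)
        (fun x hx => ((hψder x (hsubI hx)).mono hsubI).sub_const _)
        (by linarith [hψ0])
        (by
          intro x hx hgx
          have hxI := hsubI hx
          have hψx : ρ x * (1 - ρ x) - c / k x = τ / 2 := by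
            linarith
          have hO := hODE x hxI
          have hρd : ρd x = τ / (2 * ε) := by
            rw [eq_div_iff (by positivity : (2:ℝ) * ε ≠ 0)]
            linear_combination 2 * hO + 2 * hψx
          have hρx : ρ x ≤ 1/2 - r := hno x hx
          have habs := (abs_le.1 (hC' x hxI)).1
          show 0 < (1 - 2 * ρ x) * ρd x + c * deriv k x / k x ^ 2
          have hcoef : 2 * r ≤ 1 - 2 * ρ x := by linarith
          have h1 : 2 * r * (τ / (2 * ε)) ≤ (1 - 2 * ρ x) * ρd x := by
            rw [hρd]
            exact mul_le_mul_of_nonneg_right hcoef (by positivity)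
          have heq : 2 * r * (τ / (2 * ε)) = r * τ / ε := by
            field_simp
          have hpos : C' < r * τ / ε := by
            rw [lt_div_iff₀ hε]; linarith only [hε2, hε]
          linarith only [h1, heq, habs, hpos])
      have hint := integrate_ge (a := (0:ℝ)) (b := 1/2) (g := ρ) (gd := ρd)
        (q := τ / (2 * ε)) (by norm_num)
        (fun x hx => (hρder x (hsubI hx)).mono hsubI)
        (by
          intro x hx
          have h := hψgt x hx
          have hO := hODE x (hsubI hx)
          rw [div_le_iff₀ (by positivity : (0:ℝ) < 2 * ε)]
          nlinarith only [h, hO])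
      have hρhalf : ρ (1/2 : ℝ) ≤ 1/2 - r := hno (1/2) ⟨by norm_num, le_rfl⟩
      have h4 : 1/2 < τ / (4 * ε) := by
        rw [lt_div_iff₀ (by positivity)]; linarith only [hε1]
      have h5 : τ / (2 * ε) * (1/2 - 0) = τ / (4 * ε) := by
        ring
      rw [h5] at hint
      linarith only [hint, hρhalf, h4, hρ0ge, hp0a, hrpos]
  obtain ⟨x0, hx0I, hx0⟩ := hstep1
  have hx0I1 : x0 ∈ Icc (0:ℝ) 1 := ⟨hx0I.1, le_trans hx0I.2 (by norm_num)⟩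
  -- GATE 1
  have hsub01 : Icc x0 (1:ℝ) ⊆ Icc (0:ℝ) 1 := Icc_subset_Icc hx0I.1 le_rfl
  have hgate1 : ∀ x ∈ Icc x0 (1:ℝ), 1/2 - r < ρ x := by
    have h := no_downcross (a := x0) (b := 1)
      (g := fun x => ρ x - (1/2 - r)) (gd := ρd)
      (fun x hx => ((hρder x (hsub01 hx)).mono hsub01).sub_const _)
      (by linarith)
      (by
        intro x hx hgx
        have hxI := hsub01 hx
        have hρx : ρ x = 1/2 - r := by linarith
        have hO := hODE x hxI
        have hst := hstrip x hxI (by linarith only [hρx, hrpos]) (by linarith only [hρx, hrpos])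
        show 0 < ρd x
        by_contra hcon
        push_neg at hcon
        have h6 := mul_nonpos_of_nonneg_of_nonpos hε.le hcon
        linarith only [h6, hO, hst, pow_pos hrpos 2])
    intro x hx
    have := h x hx
    linarith
  -- STEP 2 : cross the strip before x = 3/4
  have hstep2 : ∃ x1 ∈ Icc x0 (3/4 : ℝ), 1/2 + r < ρ x1 := by
    by_contra hno
    push_neg at hno
    have hx034 : x0 ≤ 3/4 := le_trans hx0I.2 (by norm_num)
    have hsubI : Icc x0 (3/4:ℝ) ⊆ Icc (0:ℝ) 1 :=
      Icc_subset_Icc hx0I.1 (by norm_num)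
    have hint := integrate_ge (a := x0) (b := 3/4) (g := ρ) (gd := ρd)
      (q := r ^ 2 / ε) hx034
      (fun x hx => (hρder x (hsubI hx)).mono hsubI)
      (by
        intro x hx
        have hxI := hsubI hx
        have h1 : 1/2 - r < ρ x := hgate1 x (Icc_subset_Icc le_rfl (by norm_num) hx)
        have h2 : ρ x ≤ 1/2 + r := hno x hx
        have hO := hODE x hxI
        have hst := hstrip x hxI h1.le h2
        rw [div_le_iff₀ hε]
        nlinarith only [hst, hO])
    have h34 : ρ (3/4 : ℝ) ≤ 1/2 + r := hno (3/4) ⟨hx034, le_rfl⟩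
    have h3 : 16 * r < r ^ 2 / ε := by
      rw [lt_div_iff₀ hε]; nlinarith only [hε3, hrpos, hε]
    have h1 : (1:ℝ)/4 ≤ 3/4 - x0 := by linarith [hx0I.2]
    have h4 : 16 * r * (1/4) ≤ r ^ 2 / ε * (3/4 - x0) :=
      mul_le_mul h3.le h1 (by norm_num) (by positivity)
    linarith only [hint, hx0, h34, h4, hrpos]
  obtain ⟨x1, hx1I, hx1⟩ := hstep2
  have hx1I1 : x1 ∈ Icc (0:ℝ) 1 := ⟨le_trans hx0I.1 hx1I.1, le_trans hx1I.2 (by norm_num)⟩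
  -- GATE 2
  have hsub11 : Icc x1 (1:ℝ) ⊆ Icc (0:ℝ) 1 := Icc_subset_Icc hx1I1.1 le_rfl
  have hgate2 : ∀ x ∈ Icc x1 (1:ℝ), 1/2 + r < ρ x := by
    have h := no_downcross (a := x1) (b := 1)
      (g := fun x => ρ x - (1/2 + r)) (gd := ρd)
      (fun x hx => ((hρder x (hsub11 hx)).mono hsub11).sub_const _)
      (by linarith)
      (by
        intro x hx hgx
        have hxI := hsub11 hx
        have hρx : ρ x = 1/2 + r := by linarith
        have hO := hODE x hxI
        have hst := hstrip x hxI (by linarith only [hρx, hrpos]) (by linarith only [hρx, hrpos])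
        show 0 < ρd x
        by_contra hcon
        push_neg at hcon
        have h6 := mul_nonpos_of_nonneg_of_nonpos hε.le hcon
        linarith only [h6, hO, hst, pow_pos hrpos 2])
    intro x hx
    have := h x hx
    linarith
  -- STEP 3 : ψ becomes small before 7/8
  have hstep3 : ∃ x2 ∈ Icc x1 (7/8:ℝ), ρ x2 * (1 - ρ x2) - c / k x2 < θ := by
    by_contra hno
    push_neg at hno
    have hx178 : x1 ≤ 7/8 := le_trans hx1I.2 (by norm_num)
    have hsubI : Icc x1 (7/8:ℝ) ⊆ Icc (0:ℝ) 1 :=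
      Icc_subset_Icc hx1I1.1 (by norm_num)
    have hint := integrate_ge (a := x1) (b := 7/8)
      (g := fun x => -(ρ x * (1 - ρ x) - c / k x))
      (gd := fun x => -((1 - 2 * ρ x) * ρd x + c * deriv k x / (k x) ^ 2))
      (q := r * θ / ε) hx178
      (fun x hx => ((hψder x (hsubI hx)).mono hsubI).neg)
      (by
        intro x hx
        have hxI := hsubI hx
        have hρx : 1/2 + r < ρ x := hgate2 x (Icc_subset_Icc le_rfl (by norm_num) hx)
        have hψx : θ ≤ ρ x * (1 - ρ x) - c / k x := hno x hx
        have hO := hODE x hxI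
        have hρdge : θ / ε ≤ ρd x := by
          rw [div_le_iff₀ hε]; nlinarith only [hψx, hO]
        have hcoef : 1 - 2 * ρ x ≤ -(2 * r) := by linarith
        have h1 : (1 - 2 * ρ x) * ρd x ≤ -(2 * r) * (θ / ε) := by
          calc (1 - 2 * ρ x) * ρd x ≤ -(2 * r) * ρd x :=
                mul_le_mul_of_nonneg_right hcoef (le_trans (by positivity) hρdge)
            _ ≤ -(2 * r) * (θ / ε) := by
                apply mul_le_mul_of_nonpos_left hρdge (by linarith)
        have h2 : c * deriv k x / (k x) ^ 2 ≤ C' := (abs_le.1 (hC' x hxI)).2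
        have hpos : C' < r * θ / ε := by
          rw [lt_div_iff₀ hε]; linarith only [hε4, hε]
        have heq : -(2 * r) * (θ / ε) = -(2 * (r * θ / ε)) := by
          ring
        show r * θ / ε ≤ -((1 - 2 * ρ x) * ρd x + c * deriv k x / (k x) ^ 2)
        linarith only [h1, h2, hpos, heq])
    have hψx1le : ρ x1 * (1 - ρ x1) - c / k x1 ≤ 1/4 := by
      have h6 := hckpos x1 hx1I1
      nlinarith only [h6, sq_nonneg (ρ x1 - 1/2)]
    have h78 : θ ≤ ρ (7/8:ℝ) * (1 - ρ (7/8:ℝ)) - c / k (7/8:ℝ) := hno (7/8) ⟨hx178, le_rfl⟩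
    have h3 : 2 < r * θ / ε := by
      rw [lt_div_iff₀ hε]; linarith only [hε5]
    have h1 : (1:ℝ)/8 ≤ 7/8 - x1 := by linarith [hx1I.2]
    have h4 : 2 * (1/8) ≤ r * θ / ε * (7/8 - x1) :=
      mul_le_mul h3.le h1 (by norm_num) (by positivity)
    linarith only [hint, hψx1le, h78, hθpos, h4]
  obtain ⟨x2, hx2I, hx2⟩ := hstep3
  have hx2I1 : x2 ∈ Icc (0:ℝ) 1 := ⟨le_trans hx1I1.1 hx2I.1, le_trans hx2I.2 (by norm_num)⟩
  -- GATE 3 : ψ stays below θ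
  have hsub21 : Icc x2 (1:ℝ) ⊆ Icc (0:ℝ) 1 := Icc_subset_Icc hx2I1.1 le_rfl
  have hψ1 : ρ 1 * (1 - ρ 1) - c / k 1 < θ := by
    have h := no_downcross (a := x2) (b := 1)
      (g := fun x => θ - (ρ x * (1 - ρ x) - c / k x))
      (gd := fun x => -((1 - 2 * ρ x) * ρd x + c * deriv k x / (k x) ^ 2))
      (fun x hx => ((hψder x (hsub21 hx)).mono hsub21).const_sub _)
      (by linarith)
      (by
        intro x hx hgx
        have hxI := hsub21 hx
        have hψx : ρ x * (1 - ρ x) - c / k x = θ := by linarith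
        have hρx : 1/2 + r < ρ x :=
          hgate2 x ⟨le_trans hx2I.1 hx.1, hx.2⟩
        have hO := hODE x hxI
        have hρd : ρd x = θ / ε := by
          rw [eq_div_iff hε.ne']
          linear_combination hO + hψx
        have hcoef : 1 - 2 * ρ x ≤ -(2 * r) := by linarith
        have h1 : (1 - 2 * ρ x) * ρd x ≤ -(2 * r) * (θ / ε) := by
          rw [hρd]
          exact mul_le_mul_of_nonneg_right hcoef (by positivity)
        have h2 : c * deriv k x / (k x) ^ 2 ≤ C' := (abs_le.1 (hC' x hxI)).2
        have hpos : C' < r * θ / ε := by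
          rw [lt_div_iff₀ hε]; linarith only [hε4, hε]
        have heq : -(2 * r) * (θ / ε) = -(2 * (r * θ / ε)) := by
          ring
        show 0 < -((1 - 2 * ρ x) * ρd x + c * deriv k x / (k x) ^ 2)
        linarith only [h1, h2, hpos, heq, hC'0])
    have := h 1 ⟨hx2I1.2, le_rfl⟩
    linarith
  -- FINAL contradiction at the right boundary
  have hρ1gt : 1/2 + r < ρ 1 := hgate2 1 ⟨hx1I1.2, le_rfl⟩
  rcases le_or_gt (ρ 1) (p1 - δ' / (4 * K)) with hcase | hcase
  · -- ρ(1) on the plateau : flux must be close to maximal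
    have htt : 0 < δ' / (4 * K) := by positivity
    have htt1 : δ' / (4 * K) ≤ 1/2 := by
      rw [div_le_iff₀ (by positivity)]
      linarith only [hδ'k, hkK ξs hξI, hks]
    have hf1 : (p1 - δ' / (4 * K)) * (1 - (p1 - δ' / (4 * K))) ≤ ρ 1 * (1 - ρ 1) := by
      nlinarith only [mul_nonneg (sub_nonneg.2 hcase)
        (show (0:ℝ) ≤ ρ 1 + (p1 - δ' / (4 * K)) - 1 by
          linarith only [hρ1gt, hcase, hrpos])]
    have hf2 : p1 * (1 - p1) - δ' / (4 * K) ≤ (p1 - δ' / (4 * K)) * (1 - (p1 - δ' / (4 * K))) := by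
      nlinarith only [htt, htt1, hp1a]
    have h3 : (ρ 1 * (1 - ρ 1) - θ) * k 1 < c := by
      have hlt : c / k 1 > ρ 1 * (1 - ρ 1) - θ := by linarith only [hψ1]
      rw [gt_iff_lt, lt_div_iff₀ hk1] at hlt
      exact hlt
    have hA : (p1 * (1 - p1) - δ' / (4 * K) - θ) * k 1 ≤ (ρ 1 * (1 - ρ 1) - θ) * k 1 :=
      mul_le_mul_of_nonneg_right (by linarith only [hf1, hf2]) hk1.le
    have hB : (p1 * (1 - p1) - δ' / (4 * K) - θ) * k 1
        = k ξs / 4 - (δ' / (4 * K) + θ) * k 1 := by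
      linear_combination hid1
    have hCb : (δ' / (4 * K) + θ) * k 1 ≤ (δ' / (4 * K) + θ) * K :=
      mul_le_mul_of_nonneg_left (hkK 1 h1I) (by positivity)
    have hD : (δ' / (4 * K) + θ) * K = 3 * δ' / 8 := by
      rw [hθ]; field_simp; ring
    linarith only [hc, hA, hB, hCb, hD, h3, hδ']
  · -- ρ(1) above the plateau: β would be below 1 - p1
    have hp1t : 0 < p1 - δ' / (4 * K) := by
      have h6 : δ' / (4 * K) ≤ 1/2 := by
        rw [div_le_iff₀ (by positivity)]
        linarith only [hδ'k, hkK ξs hξI, hks]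
      linarith only [h6, hp1a]
    have hρ1pos : 0 < ρ 1 := by linarith only [hρ1gt, hrpos]
    have hβeq : β = (c / k 1) / ρ 1 := by
      rw [eq_div_iff hρ1pos.ne']
      exact hbc1'
    have hβlt : β < (c / k 1) / (p1 - δ' / (4 * K)) := by
      rw [hβeq]
      exact div_lt_div_of_pos_left (div_pos hc0 hk1) hp1t hcase
    have hfinal : (c / k 1) / (p1 - δ' / (4 * K)) < 1 - p1 := by
      rw [div_lt_iff₀ hp1t, div_lt_iff₀ hk1]
      have h1 : δ' / (4 * K) * ((1 - p1) * k 1) ≤ δ' / (4 * K) * ((1/2) * K) := by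
        apply mul_le_mul_of_nonneg_left _ (by positivity)
        nlinarith only [hp1a, hk1, hkK 1 h1I]
      have h2 : δ' / (4 * K) * ((1/2) * K) = δ' / 8 := by
        field_simp; ring
      have h3 : (1 - p1) * (p1 - δ' / (4 * K)) * k 1
          = k ξs / 4 - δ' / (4 * K) * ((1 - p1) * k 1) := by
        linear_combination hid1
      linarith only [hc, hδ', h1, h2, h3]
    linarith only [hβ, hβlt, hfinal]

/-- In the transitional/canard parameter regions
(`ρ_c^0 < α < 1`, `α ≠ 1 - ρ_c^0`; `1 - ρ_c^1 < β < 1`, `β ≠ ρ_c^1`), the constant total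
flux `k(0) j(0)` of any solution of the stationary boundary value problem converges, as
`ε → 0`, to the maximal bottleneck flux `k(ξ*)/4`. -/
theorem bvp_flux_converges_to_bottleneck_flux
    (k : ℝ → ℝ) (ξs : ℝ)
    (hk : ContDiff ℝ 2 k)
    (hkpos : ∀ x ∈ Icc (0:ℝ) 1, 0 < k x)
    (hξs : ξs ∈ Ioo (0:ℝ) 1)
    (hmin : ∀ x ∈ Icc (0:ℝ) 1, x ≠ ξs → k ξs < k x)
    (hk's : deriv k ξs = 0)
    (hk''s : 0 < deriv (deriv k) ξs)
    (α β : ℝ)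
    (hα1 : rhoC0 k ξs < α) (hα2 : α < 1) (hα3 : α ≠ 1 - rhoC0 k ξs)
    (hβ1 : 1 - rhoC1 k ξs < β) (hβ2 : β < 1) (hβ3 : β ≠ rhoC1 k ξs) :
    ∀ δ > 0, ∃ ε₀ > 0, ∀ ε : ℝ, 0 < ε → ε < ε₀ →
      ∀ ρ : ℝ → ℝ, IsStatSol k ε α β ρ →
        |k 0 * flux ε ρ 0 - k ξs / 4| < δ := by
  intro δ hδpos
  have hξI : ξs ∈ Icc (0:ℝ) 1 := ⟨hξs.1.le, hξs.2.le⟩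
  have h0I : (0:ℝ) ∈ Icc (0:ℝ) 1 := by norm_num
  have h1I : (1:ℝ) ∈ Icc (0:ℝ) 1 := by norm_num
  have hks : 0 < k ξs := hkpos ξs hξI
  have hk0 : 0 < k 0 := hkpos 0 h0I
  have hk1 : 0 < k 1 := hkpos 1 h1I
  have hks0 : k ξs < k 0 := hmin 0 h0I hξs.1.ne
  have hks1 : k ξs < k 1 := hmin 1 h1I hξs.2.ne'
  have hkmin : ∀ x ∈ Icc (0:ℝ) 1, k ξs ≤ k x := by
    intro x hx
    rcases eq_or_ne x ξs with rfl | hne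
    · exact le_rfl
    · exact (hmin x hx hne).le
  -- global bounds for k and deriv k
  obtain ⟨K, hKb⟩ := isCompact_Icc.exists_bound_of_continuousOn
    (hk.continuous.continuousOn : ContinuousOn k (Icc (0:ℝ) 1))
  have hkK : ∀ x ∈ Icc (0:ℝ) 1, k x ≤ K := fun x hx =>
    (le_abs_self _).trans (by simpa [Real.norm_eq_abs] using hKb x hx)
  have hK0 : 0 < K := lt_of_lt_of_le hks (hkK ξs hξI)
  obtain ⟨K', hK'b⟩ := isCompact_Icc.exists_bound_of_continuousOn
    ((hk.continuous_deriv (by norm_num)).continuousOn : ContinuousOn (deriv k) (Icc (0:ℝ) 1))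
  have hkK' : ∀ x ∈ Icc (0:ℝ) 1, |deriv k x| ≤ K' := fun x hx => by
    simpa [Real.norm_eq_abs] using hK'b x hx
  have hK'0 : 0 ≤ K' := (abs_nonneg _).trans (hkK' 0 h0I)
  -- properties of the critical densities
  have harg0 : 0 ≤ 1 - k ξs / k 0 := by
    have : k ξs / k 0 ≤ 1 := (div_le_one hk0).2 hks0.le
    linarith
  have harg0p : 1 - k ξs / k 0 < 1 := by
    have : 0 < k ξs / k 0 := div_pos hks hk0
    linarith
  have hs0sq : (Real.sqrt (1 - k ξs / k 0)) ^ 2 = 1 - k ξs / k 0 := Real.sq_sqrt harg0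
  have hs0lt : Real.sqrt (1 - k ξs / k 0) < 1 := by
    have := Real.sqrt_lt_sqrt harg0 harg0p
    rwa [Real.sqrt_one] at this
  have hs0pos : 0 < Real.sqrt (1 - k ξs / k 0) := Real.sqrt_pos.2 (by
    have : k ξs / k 0 < 1 := (div_lt_one hk0).2 hks0
    linarith)
  have hp0a : 0 < rhoC0 k ξs := by unfold rhoC0; linarith
  have hp0b : rhoC0 k ξs < 1/2 := by unfold rhoC0; linarith
  have hid0 : k 0 * (rhoC0 k ξs * (1 - rhoC0 k ξs)) = k ξs / 4 := by
    unfold rhoC0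
    have hexp : k 0 * (1/2 * (1 - Real.sqrt (1 - k ξs / k 0)) *
        (1 - 1/2 * (1 - Real.sqrt (1 - k ξs / k 0))))
        = k 0 * (1 - (Real.sqrt (1 - k ξs / k 0)) ^ 2) / 4 := by ring
    rw [hexp, hs0sq]
    field_simp
    ring
  have harg1 : 0 ≤ 1 - k ξs / k 1 := by
    have : k ξs / k 1 ≤ 1 := (div_le_one hk1).2 hks1.le
    linarith
  have hs1sq : (Real.sqrt (1 - k ξs / k 1)) ^ 2 = 1 - k ξs / k 1 := Real.sq_sqrt harg1
  have hs1lt : Real.sqrt (1 - k ξs / k 1) < 1 := by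
    have harg1p : 1 - k ξs / k 1 < 1 := by
      have : 0 < k ξs / k 1 := div_pos hks hk1
      linarith
    have := Real.sqrt_lt_sqrt harg1 harg1p
    rwa [Real.sqrt_one] at this
  have hs1pos : 0 < Real.sqrt (1 - k ξs / k 1) := Real.sqrt_pos.2 (by
    have : k ξs / k 1 < 1 := (div_lt_one hk1).2 hks1
    linarith)
  have hp1a : 1/2 < rhoC1 k ξs := by unfold rhoC1; linarith
  have hp1b : rhoC1 k ξs < 1 := by unfold rhoC1; linarith
  have hid1 : k 1 * (rhoC1 k ξs * (1 - rhoC1 k ξs)) = k ξs / 4 := by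
    unfold rhoC1
    have hexp : k 1 * (1/2 * (1 + Real.sqrt (1 - k ξs / k 1)) *
        (1 - 1/2 * (1 + Real.sqrt (1 - k ξs / k 1))))
        = k 1 * (1 - (Real.sqrt (1 - k ξs / k 1)) ^ 2) / 4 := by ring
    rw [hexp, hs1sq]
    field_simp
    ring
  have hα0 : 0 < α := hp0a.trans hα1
  have hβ0 : 0 < β := by linarith
  -- the effective tolerance
  set δ' := min δ (k ξs / 32) with hδ'def
  have hδ'pos : 0 < δ' := lt_min hδpos (by positivity)
  have hδ'le : δ' ≤ δ := min_le_left _ _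
  have hδ'k : δ' ≤ k ξs / 32 := min_le_right _ _
  -- the parameters of the small-flux analysis
  set r := Real.sqrt (δ' / (2 * k ξs)) with hrdef
  have hr2 : r ^ 2 = δ' / (2 * k ξs) := Real.sq_sqrt (by positivity)
  have hrpos : 0 < r := Real.sqrt_pos.2 (by positivity)
  have hr8 : r ≤ 1/8 := by
    have h1 : δ' / (2 * k ξs) ≤ 1/64 := by
      rw [div_le_iff₀ (by positivity)]
      linarith
    calc r ≤ Real.sqrt (1/64) := Real.sqrt_le_sqrt h1
      _ = 1/8 := by
          rw [show (1/64:ℝ) = (1/8)^2 by norm_num, Real.sqrt_sq (by norm_num)]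
  set τ := δ' / (2 * K) with hτdef
  set θ := δ' / (8 * K) with hθdef
  have hτpos : 0 < τ := by positivity
  have hθpos : 0 < θ := by positivity
  set C' := k ξs / 4 * K' / (k ξs) ^ 2 with hC'def
  have hC'0 : 0 ≤ C' := by positivity
  -- the bottleneck window
  obtain ⟨η₀, hη₀pos, hη₀⟩ := Metric.continuousAt_iff.1 (hk.continuous.continuousAt) δ' hδ'pos
  set η := min (η₀ / 2) (min ξs (1 - ξs)) with hηdef
  have hηpos : 0 < η := lt_min (by positivity) (lt_min hξs.1 (by linarith [hξs.2]))
  have hηsub : Icc (ξs - η) (ξs + η) ⊆ Icc (0:ℝ) 1 := by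
    intro x hx
    have h1 : η ≤ ξs := le_trans (min_le_right _ _) (min_le_left _ _)
    have h2 : η ≤ 1 - ξs := le_trans (min_le_right _ _) (min_le_right _ _)
    exact ⟨by linarith [hx.1], by linarith [hx.2]⟩
  have hηk : ∀ x ∈ Icc (ξs - η) (ξs + η), k x ≤ k ξs + δ' := by
    intro x hx
    have h1 : dist x ξs < η₀ := by
      rw [Real.dist_eq, abs_lt]
      have hhalf : η ≤ η₀ / 2 := min_le_left _ _
      exact ⟨by linarith [hx.1], by linarith [hx.2]⟩
    have := hη₀ h1
    rw [Real.dist_eq, abs_lt] at this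
    linarith [this.2]
  set mup := 3 * δ' / (4 * (k ξs + δ')) with hmupdef
  have hmuppos : 0 < mup := by positivity
  -- the threshold
  refine ⟨min (min (2 * η * mup) (τ / 2))
      (min (min (r * τ / (C' + 1)) (r / 16)) (min (r * θ / (C' + 1)) (r * θ / 2))), by positivity,
      ?_⟩
  intro ε hε hεlt ρ hsol
  obtain ⟨hC2, hconst, hbcl, hbcr⟩ := hsol
  have hεa : ε < 2 * η * mup := lt_of_lt_of_le hεlt (le_trans (min_le_left _ _) (min_le_left _ _))
  have hε1 : ε < τ / 2 := lt_of_lt_of_le hεlt (le_trans (min_le_left _ _) (min_le_right _ _))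
  have hε2' : ε < r * τ / (C' + 1) := lt_of_lt_of_le hεlt
    (le_trans (min_le_right _ _) (le_trans (min_le_left _ _) (min_le_left _ _)))
  have hε3 : ε < r / 16 := lt_of_lt_of_le hεlt
    (le_trans (min_le_right _ _) (le_trans (min_le_left _ _) (min_le_right _ _)))
  have hε4' : ε < r * θ / (C' + 1) := lt_of_lt_of_le hεlt
    (le_trans (min_le_right _ _) (le_trans (min_le_right _ _) (min_le_left _ _)))
  have hε5 : ε < r * θ / 2 := lt_of_lt_of_le hεlt
    (le_trans (min_le_right _ _) (le_trans (min_le_right _ _) (min_le_right _ _)))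
  have hε2 : ε * (C' + 1) < r * τ := by
    rw [lt_div_iff₀ (by positivity)] at hε2'; exact hε2'
  have hε4 : ε * (C' + 1) < r * θ := by
    rw [lt_div_iff₀ (by positivity)] at hε4'; exact hε4'
  -- analytic setup
  have hudO : UniqueDiffOn ℝ (Icc (0:ℝ) 1) := uniqueDiffOn_Icc (by norm_num)
  have hρdiff : DifferentiableOn ℝ ρ (Icc (0:ℝ) 1) := hC2.differentiableOn (by norm_num)
  have hρder : ∀ x ∈ Icc (0:ℝ) 1,
      HasDerivWithinAt ρ (derivWithin ρ (Icc (0:ℝ) 1) x) (Icc (0:ℝ) 1) x :=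
    fun x hx => (hρdiff x hx).hasDerivWithinAt
  have hρd1 : ContDiffOn ℝ 1 (derivWithin ρ (Icc (0:ℝ) 1)) (Icc (0:ℝ) 1) :=
    hC2.derivWithin hudO (by norm_num)
  have hfluxdo : DifferentiableOn ℝ (fun y => k y * flux ε ρ y) (Icc (0:ℝ) 1) := by
    have h1 : DifferentiableOn ℝ (flux ε ρ) (Icc (0:ℝ) 1) := by
      unfold flux
      exact ((hρd1.differentiableOn (by norm_num)).const_mul (-ε)).add
        (hρdiff.mul ((differentiableOn_const 1).sub hρdiff))
    exact ((hk.differentiable (by norm_num)).differentiableOn).mul h1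
  set c := k 0 * flux ε ρ 0 with hcdef
  have hconst' : ∀ x ∈ Icc (0:ℝ) 1, k x * flux ε ρ x = c :=
    constant_of_derivWithin_zero hfluxdo (fun x hx => hconst x (Ico_subset_Icc_self hx))
  have hODE : ∀ x ∈ Icc (0:ℝ) 1, ε * derivWithin ρ (Icc (0:ℝ) 1) x
      = ρ x * (1 - ρ x) - c / k x := by
    intro x hx
    have h := hconst' x hx
    have hkx := hkpos x hx
    have hfl : flux ε ρ x = c / k x := by
      rw [eq_div_iff hkx.ne']
      linear_combination h
    unfold flux at hfl
    linarith
  have hbc0' : k 0 * (α * (1 - ρ 0)) = c := by rw [hcdef, hbcl]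
  have hbc1' : k 1 * (β * ρ 1) = c := by
    have := hconst' 1 h1I
    rw [hbcr] at this
    exact this
  have hψder : ∀ x ∈ Icc (0:ℝ) 1, HasDerivWithinAt (fun y => ρ y * (1 - ρ y) - c / k y)
      ((1 - 2 * ρ x) * derivWithin ρ (Icc (0:ℝ) 1) x + c * deriv k x / (k x) ^ 2)
      (Icc (0:ℝ) 1) x := by
    intro x hx
    have hρx := hρder x hx
    have h1 : HasDerivWithinAt (fun y => ρ y * (1 - ρ y))
        (derivWithin ρ (Icc (0:ℝ) 1) x * (1 - ρ x)
          + ρ x * (0 - derivWithin ρ (Icc (0:ℝ) 1) x)) (Icc (0:ℝ) 1) x :=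
      hρx.mul ((hasDerivWithinAt_const x _ 1).sub hρx)
    have hkd : HasDerivAt k (deriv k x) x := (hk.differentiable (by norm_num) x).hasDerivAt
    have h2 : HasDerivWithinAt (fun y => c / k y)
        ((0 * k x - c * deriv k x) / (k x) ^ 2) (Icc (0:ℝ) 1) x :=
      (hasDerivWithinAt_const x _ c).div hkd.hasDerivWithinAt (hkpos x hx).ne'
    have h3 := h1.sub h2
    exact h3.congr_deriv (by ring)
  -- final split on the value of the flux
  by_contra habs
  push_neg at habs
  have habs' : δ' ≤ |c - k ξs / 4| := le_trans hδ'le habs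
  rcases abs_cases (c - k ξs / 4) with ⟨heq, hsgn⟩ | ⟨heq, hsgn⟩
  · -- c ≥ kξs/4 + δ'
    have hc : k ξs / 4 + δ' ≤ c := by rw [heq] at habs'; linarith
    have hmle : ∀ x ∈ Icc (ξs - η) (ξs + η), 1/4 + mup ≤ c / k x := by
      intro x hx
      have hkx := hkpos x (hηsub hx)
      have h1 : c / (k ξs + δ') ≤ c / k x :=
        div_le_div_of_nonneg_left (by linarith) hkx (hηk x hx)
      have h2 : (k ξs / 4 + δ') / (k ξs + δ') ≤ c / (k ξs + δ') :=
        div_le_div_of_nonneg_right hc (by positivity)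
      have h3 : (k ξs / 4 + δ') / (k ξs + δ') = 1/4 + mup := by
        rw [hmupdef]
        field_simp
        ring
      linarith
    exact absurd (case_large hkpos hε hα0 hβ0 hρder hODE hbc0' hbc1' hδ'pos hks hc hηpos
      hηsub hmuppos hmle hεa) (by simp)
  · -- c ≤ kξs/4 - δ'
    have hc : c ≤ k ξs / 4 - δ' := by rw [heq] at habs'; linarith
    rcases le_or_gt c 0 with hc0 | hc0
    · exact absurd (case_neg hkpos hε hα0 hβ0 hρder hODE hbc0' hbc1' hc0) (by simp)
    · have hC' : ∀ x ∈ Icc (0:ℝ) 1, |c * deriv k x / (k x) ^ 2| ≤ C' := by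
        intro x hx
        have hkx := hkpos x hx
        have h1 : |c * deriv k x| ≤ k ξs / 4 * K' := by
          rw [abs_mul, abs_of_pos hc0]
          apply mul_le_mul (by linarith) (hkK' x hx) (abs_nonneg _) (by positivity)
        have h2 : (k ξs) ^ 2 ≤ (k x) ^ 2 := pow_le_pow_left₀ hks.le (hkmin x hx) 2
        calc |c * deriv k x / (k x) ^ 2| = |c * deriv k x| / (k x) ^ 2 := by
              rw [abs_div, abs_of_pos (by positivity : (0:ℝ) < (k x) ^ 2)]
          _ ≤ (k ξs / 4 * K') / (k ξs) ^ 2 :=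
              div_le_div₀ (by positivity) h1 (by positivity) h2
          _ = C' := by rw [hC'def]
      exact absurd (case_small hkpos hkmin hkK hξI hks hε hδ'pos hδ'k hρder hODE hψder
        hbc0' hbc1' hp0a hp0b hid0 hp1a hp1b hid1 hα1 hβ1 hc0 hc hr2 hrpos hr8
        hτdef hθdef hK0 hC' hε1 hε2 hε3 hε4 hε5) (by simp)
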